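/- arXiv:2408.16404 — 2 statements merged into one kernel-verified Lean document; each statement's English description precedes it below -/
import Mathlib

section
/- Let m be the measure on the Borel σ-algebra of ℝ^ℕ defined by m(A) = sup_k μ_k(A ∩ ℝ_I^k), where I = [−1/2,1/2], ℝ_I^k = {x ∈ ℝ^ℕ : x_i ∈ I for all i > k}, and μ_k is the product of k-dimensional Lebesgue measure on the first k coordinates with the countable product of uniform probability measures on I on the remaining coordinates. Then for every n ∈ ℕ, every Borel set A ⊆ ℝ^n, every a ∈ ℝ^n, and every linear isometry T of ℝ^n, one has m((A + a) × I_n) = m(A × I_n) and m(T(A) × I_n) = m(A × I_n), where A × I_n := {x ∈ ℝ^ℕ : (x_1, …, x_n) ∈ A and x_i ∈ I for all i > n}. That is, m is translationally and rotationally invariant on ℝ_I^n. -/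
open MeasureTheory
open scoped ENNReal

/-- The interval `I = [-1/2, 1/2]`. -/
def Icube : Set ℝ := Set.Icc (-(1 / 2) : ℝ) (1 / 2)

/-- `ℝ_I^k`: the sequences whose coordinates beyond the first `k` lie in `I`. -/
def RIn (k : ℕ) : Set (ℕ → ℝ) := {x | ∀ i, k ≤ i → x i ∈ Icube}

/-- `μₖ` is the product of `k`-dimensional Lebesgue measure on the first `k`
coordinates with the countable product of copies of the uniform probability measure
on `I = [-1/2, 1/2]` (one-dimensional Lebesgue measure restricted to `I`) on the
remaining coordinates.  This is characterized (uniquely, by the π-system of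
measurable cylinders together with the σ-finite exhaustion by cylinders with bounded
first `k` coordinates) by the product formula on measurable cylinders
`{x | ∀ i < m, x i ∈ A i}` for `m ≥ k`. -/
def IsProdWithUniform (k : ℕ) (μk : Measure (ℕ → ℝ)) : Prop :=
  ∀ m : ℕ, k ≤ m → ∀ A : ℕ → Set ℝ, (∀ i, MeasurableSet (A i)) →
    μk {x | ∀ i, i < m → x i ∈ A i} =
      (∏ i ∈ Finset.range k, volume (A i)) * ∏ i ∈ Finset.Ico k m, volume (A i ∩ Icube)

/-- The set function `m(A) = sup_k μₖ(A ∩ ℝ_I^k)`. -/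
noncomputable def mSup (μ : ℕ → Measure (ℕ → ℝ)) (A : Set (ℕ → ℝ)) : ℝ≥0∞ :=
  ⨆ k, μ k (A ∩ RIn k)

/-- The cylinder `A × I_n ⊆ ℝ^ℕ` over a set `A ⊆ ℝ^n`. -/
def cylSet (n : ℕ) (A : Set (Fin n → ℝ)) : Set (ℕ → ℝ) :=
  {x : ℕ → ℝ | (fun i : Fin n => x (i : ℕ)) ∈ A ∧ ∀ i, n ≤ i → x i ∈ Icube}

open Set

lemma measurableSet_Icube : MeasurableSet Icube := measurableSet_Icc

lemma volume_Icube : volume Icube = 1 := by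
  rw [Icube, Real.volume_Icc]
  norm_num

lemma measurable_proj (n : ℕ) : Measurable (fun x : ℕ → ℝ => fun i : Fin n => x (i : ℕ)) :=
  measurable_pi_lambda _ fun _ => measurable_pi_apply _

lemma measurableSet_RIn (k : ℕ) : MeasurableSet (RIn k) := by
  have h : RIn k = ⋂ i, ⋂ _ : k ≤ i, (fun x : ℕ → ℝ => x i) ⁻¹' Icube := by
    ext x; simp [RIn]
  rw [h]
  exact MeasurableSet.iInter fun i => MeasurableSet.iInter fun _ =>
    (measurable_pi_apply i) measurableSet_Icube

lemma cylSet_eq (n : ℕ) (A : Set (Fin n → ℝ)) :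
    cylSet n A = (fun x : ℕ → ℝ => fun i : Fin n => x (i : ℕ)) ⁻¹' A ∩ RIn n := rfl

lemma RIn_inter_RIn (n k : ℕ) : RIn n ∩ RIn k = RIn (min k n) := by
  ext x
  constructor
  · rintro ⟨h1, h2⟩ i hi
    rcases le_or_gt n i with h | h
    · exact h1 i h
    · exact h2 i (by omega)
  · intro h
    exact ⟨fun i hi => h i (by omega), fun i hi => h i (by omega)⟩

/-- Finite-measure boxes case of the cylinder computation. -/
lemma cyl_box_measure_finite (μk : Measure (ℕ → ℝ)) (k : ℕ) (h : IsProdWithUniform k μk)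
    (n : ℕ) (s : Fin n → Set ℝ) (hs : ∀ i, MeasurableSet (s i))
    (hfin : ∀ i, volume (s i) ≠ ∞) :
    μk ((fun x : ℕ → ℝ => fun i : Fin n => x (i : ℕ)) ⁻¹' (univ.pi s) ∩ RIn (min k n)) =
      ∏ i : Fin n, (if (i : ℕ) < min k n then volume (s i) else volume (s i ∩ Icube)) := by
  classical
  set C : ℕ → Set ℝ :=
    fun i => (if h : i < n then s ⟨i, h⟩ else univ) ∩ (if min k n ≤ i then Icube else univ)
    with hCdef
  have hCmeas : ∀ i, MeasurableSet (C i) := by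
    intro i
    apply MeasurableSet.inter <;> split_ifs <;>
      first | exact hs _ | exact measurableSet_Icube | exact MeasurableSet.univ
  set E : ℕ → Set (ℕ → ℝ) := fun m => {x | ∀ i, i < m → x i ∈ C i} with hEdef
  have hEmeas : ∀ m, MeasurableSet (E m) := by
    intro m
    have hrw : E m = ⋂ i, ⋂ _ : i < m, (fun x : ℕ → ℝ => x i) ⁻¹' C i := by
      ext x; simp [hEdef]
    rw [hrw]
    exact MeasurableSet.iInter fun i => MeasurableSet.iInter fun _ =>
      (measurable_pi_apply i) (hCmeas i)
  set t : ℕ → ℝ≥0∞ := fun i =>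
    if h : i < n then
      (if i < min k n then volume (s ⟨i, h⟩) else volume (s ⟨i, h⟩ ∩ Icube)) else 1
    with htdef
  have hEval : ∀ m, max n k ≤ m → μk (E m) =
      ∏ i : Fin n, (if (i : ℕ) < min k n then volume (s i) else volume (s i ∩ Icube)) := by
    intro m hm
    have hkm : k ≤ m := le_trans (le_max_right _ _) hm
    have hnm : n ≤ m := le_trans (le_max_left _ _) hm
    rw [h m hkm C hCmeas]
    have h1 : ∀ i ∈ Finset.range k, volume (C i) = t i := by
      intro i hi
      rw [Finset.mem_range] at hi
      by_cases hij : i < min k n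
      · have hin : i < n := by omega
        simp only [hCdef, htdef, dif_pos hin, if_pos hij, if_neg (by omega : ¬ min k n ≤ i),
          Set.inter_univ]
      · have hin : ¬ i < n := by omega
        simp only [hCdef, htdef, dif_neg hin, if_pos (by omega : min k n ≤ i), Set.univ_inter]
        exact volume_Icube
    have h2 : ∀ i ∈ Finset.Ico k m, volume (C i ∩ Icube) = t i := by
      intro i hi
      rw [Finset.mem_Ico] at hi
      by_cases hin : i < n
      · simp only [hCdef, htdef, dif_pos hin, if_pos (by omega : min k n ≤ i),
          if_neg (by omega : ¬ i < min k n), Set.inter_assoc, Set.inter_self]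
      · simp only [hCdef, htdef, dif_neg hin, if_pos (by omega : min k n ≤ i), Set.univ_inter,
          Set.inter_self]
        exact volume_Icube
    rw [Finset.prod_congr rfl h1, Finset.prod_congr rfl h2,
      Finset.prod_range_mul_prod_Ico t hkm]
    have h3 : ∏ i ∈ Finset.range m, t i = ∏ i ∈ Finset.range n, t i := by
      rw [← Finset.prod_range_mul_prod_Ico t hnm]
      have hIco : ∏ i ∈ Finset.Ico n m, t i = 1 := by
        refine Finset.prod_eq_one fun i hi => ?_
        have : ¬ i < n := by rw [Finset.mem_Ico] at hi; omega
        simp [htdef, this]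
      rw [hIco, mul_one]
    rw [h3, ← Fin.prod_univ_eq_prod_range (fun i => t i) n]
    exact Finset.prod_congr rfl fun i _ => by simp [htdef, i.isLt]
  have hInter :
      (fun x : ℕ → ℝ => fun i : Fin n => x (i : ℕ)) ⁻¹' (univ.pi s) ∩ RIn (min k n) =
        ⋂ m, E (max n k + m) := by
    ext x
    simp only [Set.mem_inter_iff, Set.mem_preimage, Set.mem_univ_pi, Set.mem_iInter, RIn,
      Set.mem_setOf_eq, hEdef]
    constructor
    · rintro ⟨hx1, hx2⟩ m i _
      refine ⟨?_, ?_⟩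
      · split_ifs with hin
        · exact hx1 ⟨i, hin⟩
        · trivial
      · split_ifs with hji
        · exact hx2 i hji
        · trivial
    · intro H
      have hx : ∀ i, x i ∈ C i := fun i => H (i + 1) i (by omega)
      constructor
      · intro i
        have := (hx (i : ℕ)).1
        rw [dif_pos i.isLt] at this
        simpa using this
      · intro i hji
        have := (hx i).2
        rwa [if_pos hji] at this
  rw [hInter]
  have hanti : ∀ {a b : ℕ}, a ≤ b → E (max n k + b) ⊆ E (max n k + a) :=
    fun hab x hx i hi => hx i (by omega)
  rw [Directed.measure_iInter (fun m => (hEmeas _).nullMeasurableSet)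
    (fun a b => ⟨max a b, hanti (le_max_left _ _), hanti (le_max_right _ _)⟩)
    ⟨0, by
      rw [hEval _ (Nat.le_add_right _ _)]
      refine (ENNReal.prod_lt_top fun i _ => ?_).ne
      split_ifs
      · exact (hfin i).lt_top
      · exact lt_of_le_of_lt (measure_mono Set.inter_subset_left) (hfin i).lt_top⟩]
  have : ∀ m : ℕ, μk (E (max n k + m)) =
      ∏ i : Fin n, (if (i : ℕ) < min k n then volume (s i) else volume (s i ∩ Icube)) :=
    fun m => hEval _ (Nat.le_add_right _ _)
  simp only [this]
  exact iInf_const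

/-- General boxes case of the cylinder computation. -/
lemma cyl_box_measure (μk : Measure (ℕ → ℝ)) (k : ℕ) (h : IsProdWithUniform k μk)
    (n : ℕ) (s : Fin n → Set ℝ) (hs : ∀ i, MeasurableSet (s i)) :
    μk ((fun x : ℕ → ℝ => fun i : Fin n => x (i : ℕ)) ⁻¹' (univ.pi s) ∩ RIn (min k n)) =
      ∏ i : Fin n, (if (i : ℕ) < min k n then volume (s i) else volume (s i ∩ Icube)) := by
  classical
  set sR : ℕ → Fin n → Set ℝ := fun R i => s i ∩ Icc (-(R : ℝ)) R with hsRdef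
  have hsRmeas : ∀ R i, MeasurableSet (sR R i) := fun R i => (hs i).inter measurableSet_Icc
  have hsRfin : ∀ R i, volume (sR R i) ≠ ∞ := by
    intro R i
    exact (lt_of_le_of_lt (measure_mono Set.inter_subset_right)
      (by rw [Real.volume_Icc]; exact ENNReal.ofReal_lt_top)).ne
  have hsRmono : ∀ i, Monotone (fun R => sR R i) := by
    intro i a b hab
    have hcast : (a : ℝ) ≤ b := by exact_mod_cast hab
    exact Set.inter_subset_inter_right _ (Set.Icc_subset_Icc (by linarith) hcast)
  have hPiUnion : univ.pi s = ⋃ R, univ.pi (sR R) := by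
    ext x
    simp only [Set.mem_univ_pi, Set.mem_iUnion]
    constructor
    · intro hx
      set R : ℕ := Finset.univ.sup (fun i : Fin n => ⌈|x i|⌉₊) with hR
      refine ⟨R, fun i => ⟨hx i, ?_⟩⟩
      have h1 : |x i| ≤ (R : ℝ) := by
        refine le_trans (Nat.le_ceil _) ?_
        have h2 : ⌈|x i|⌉₊ ≤ R := by
          rw [hR]; exact Finset.le_sup (f := fun i : Fin n => ⌈|x i|⌉₊) (Finset.mem_univ i)
        exact_mod_cast h2
      rw [Set.mem_Icc]
      constructor <;> [linarith [abs_le.1 h1]; exact (abs_le.1 h1).2]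
    · rintro ⟨R, hR⟩ i
      exact (hR i).1
  set ν : Measure (Fin n → ℝ) :=
    Measure.pi (fun i : Fin n =>
      volume.restrict (if (i : ℕ) < min k n then univ else Icube)) with hνdef
  have hν : ∀ (u : Fin n → Set ℝ), (∀ i, MeasurableSet (u i)) →
      ν (univ.pi u) = ∏ i : Fin n,
        (if (i : ℕ) < min k n then volume (u i) else volume (u i ∩ Icube)) := by
    intro u hu
    rw [hνdef, Measure.pi_pi]
    refine Finset.prod_congr rfl fun i _ => ?_
    rw [Measure.restrict_apply (hu i)]
    split_ifs <;> simp
  have hmono1 : Monotone (fun R =>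
      (fun x : ℕ → ℝ => fun i : Fin n => x (i : ℕ)) ⁻¹' (univ.pi (sR R)) ∩ RIn (min k n)) := by
    intro a b hab
    exact Set.inter_subset_inter_left _
      (Set.preimage_mono (Set.pi_mono fun i _ => hsRmono i hab))
  have hmono2 : Monotone (fun R => univ.pi (sR R)) :=
    fun a b hab => Set.pi_mono fun i _ => hsRmono i hab
  calc
    μk ((fun x : ℕ → ℝ => fun i : Fin n => x (i : ℕ)) ⁻¹' (univ.pi s) ∩ RIn (min k n))
      = μk (⋃ R, (fun x : ℕ → ℝ => fun i : Fin n => x (i : ℕ)) ⁻¹' (univ.pi (sR R))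
          ∩ RIn (min k n)) := by
        rw [hPiUnion, Set.preimage_iUnion, Set.iUnion_inter]
    _ = ⨆ R, μk ((fun x : ℕ → ℝ => fun i : Fin n => x (i : ℕ)) ⁻¹' (univ.pi (sR R))
          ∩ RIn (min k n)) := Monotone.measure_iUnion hmono1
    _ = ⨆ R, ν (univ.pi (sR R)) := by
        refine iSup_congr fun R => ?_
        rw [cyl_box_measure_finite μk k h n (sR R) (hsRmeas R) (hsRfin R),
          hν (sR R) (hsRmeas R)]
    _ = ν (⋃ R, univ.pi (sR R)) := (Monotone.measure_iUnion hmono2).symm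
    _ = ν (univ.pi s) := by rw [← hPiUnion]
    _ = _ := hν s hs

lemma map_restrict_eq (μk : Measure (ℕ → ℝ)) (k : ℕ) (h : IsProdWithUniform k μk) (n : ℕ) :
    Measure.map (fun x : ℕ → ℝ => fun i : Fin n => x (i : ℕ)) (μk.restrict (RIn (min k n))) =
      Measure.pi (fun i : Fin n =>
        volume.restrict (if (i : ℕ) < min k n then univ else Icube)) := by
  refine (Measure.pi_eq fun s hs => ?_).symm
  rw [Measure.map_apply (measurable_proj n) (MeasurableSet.univ_pi hs),
    Measure.restrict_apply ((measurable_proj n) (MeasurableSet.univ_pi hs)),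
    cyl_box_measure μk k h n s hs]
  refine Finset.prod_congr rfl fun i _ => ?_
  rw [Measure.restrict_apply (hs i)]
  split_ifs <;> simp

lemma pi_restrict_eq (n : ℕ) (U : Fin n → Set ℝ) (hU : ∀ i, MeasurableSet (U i)) :
    Measure.pi (fun i : Fin n => volume.restrict (U i)) =
      (Measure.pi fun _ : Fin n => (volume : Measure ℝ)).restrict (univ.pi U) := by
  refine Measure.pi_eq fun s hs => ?_
  rw [Measure.restrict_apply (MeasurableSet.univ_pi hs), ← Set.pi_inter_distrib,
    Measure.pi_pi]
  exact Finset.prod_congr rfl fun i _ => (Measure.restrict_apply (hs i)).symm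

/-- The central computation: `mSup` of a cylinder over a measurable `A ⊆ ℝ^n`
is the Lebesgue measure of `A`. -/
lemma mSup_cylSet (μ : ℕ → Measure (ℕ → ℝ)) (hμ : ∀ k, IsProdWithUniform k (μ k))
    (n : ℕ) (A : Set (Fin n → ℝ)) (hA : MeasurableSet A) :
    mSup μ (cylSet n A) = volume A := by
  have hterm : ∀ k, μ k (cylSet n A ∩ RIn k) =
      Measure.pi (fun i : Fin n =>
        volume.restrict (if (i : ℕ) < min k n then univ else Icube)) A := by
    intro k
    rw [cylSet_eq, Set.inter_assoc, RIn_inter_RIn, ← map_restrict_eq (μ k) k (hμ k) n,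
      Measure.map_apply (measurable_proj n) hA,
      Measure.restrict_apply ((measurable_proj n) hA)]
  have hvol : (volume : Measure (Fin n → ℝ)) = Measure.pi fun _ => volume := by
    rw [MeasureTheory.volume_pi]
  rw [mSup]
  refine le_antisymm (iSup_le fun k => ?_) ?_
  · rw [hterm k, pi_restrict_eq n _ (fun i => by split_ifs <;>
      first | exact MeasurableSet.univ | exact measurableSet_Icube),
      Measure.restrict_apply hA, hvol]
    exact measure_mono Set.inter_subset_left
  · refine le_trans (le_of_eq ?_) (le_iSup (fun k => μ k (cylSet n A ∩ RIn k)) n)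
    rw [hterm n, hvol]
    congr 1
    refine congrArg Measure.pi (funext fun i => ?_)
    rw [if_pos (by simpa using i.isLt), Measure.restrict_univ]

lemma sum_mul_eq_of_norm_preserving {n : ℕ} (T : (Fin n → ℝ) →ₗ[ℝ] (Fin n → ℝ))
    (hT : ∀ y : Fin n → ℝ, ∑ i, (T y i) ^ 2 = ∑ i, (y i) ^ 2) (x y : Fin n → ℝ) :
    ∑ i, T x i * T y i = ∑ i, x i * y i := by
  have expand : ∀ u v : Fin n → ℝ,
      ∑ i, (u i + v i) ^ 2 = ∑ i, u i ^ 2 + 2 * ∑ i, u i * v i + ∑ i, v i ^ 2 := by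
    intro u v
    rw [Finset.mul_sum, ← Finset.sum_add_distrib, ← Finset.sum_add_distrib]
    exact Finset.sum_congr rfl fun i _ => by ring
  have h1 := hT (x + y)
  have h2 := hT x
  have h3 := hT y
  simp only [map_add, Pi.add_apply] at h1
  rw [expand (fun i => T x i) (fun i => T y i), expand x y] at h1
  linarith

/-- `m(A) = sup_k μₖ(A ∩ ℝ_I^k)` is translation and rotation invariant
on the cylinders over `ℝ^n`: for every Borel set `A ⊆ ℝ^n`, every vector `a ∈ ℝ^n`
and every linear map `T : ℝ^n → ℝ^n` preserving the Euclidean norm,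
`m((A + a) × I_n) = m(A × I_n)` and `m(T(A) × I_n) = m(A × I_n)`. -/
theorem mSup_translation_rotation_invariant
    (μ : ℕ → Measure (ℕ → ℝ)) (hμ : ∀ k, IsProdWithUniform k (μ k)) :
    ∀ (n : ℕ) (A : Set (Fin n → ℝ)), MeasurableSet A →
      (∀ a : Fin n → ℝ,
        mSup μ (cylSet n ((fun y => y + a) '' A)) = mSup μ (cylSet n A)) ∧
      (∀ T : (Fin n → ℝ) →ₗ[ℝ] (Fin n → ℝ),
        (∀ y : Fin n → ℝ, ∑ i, (T y i) ^ 2 = ∑ i, (y i) ^ 2) →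
          mSup μ (cylSet n (T '' A)) = mSup μ (cylSet n A)) := by
  intro n A hA
  constructor
  · intro a
    have himg : (fun y => y + a) '' A = (fun y => y + (-a)) ⁻¹' A := by
      ext y
      constructor
      · rintro ⟨z, hz, rfl⟩
        simpa using hz
      · intro hy
        exact ⟨y + (-a), hy, by simp⟩
    have hmeas : MeasurableSet ((fun y => y + a) '' A) := by
      rw [himg]
      exact (measurable_id.add_const (-a)) hA
    rw [mSup_cylSet μ hμ n _ hmeas, mSup_cylSet μ hμ n A hA, himg]
    exact measure_preimage_add_right volume (-a) A
  · intro T hT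
    have hinj : Function.Injective T := by
      rw [← LinearMap.ker_eq_bot, LinearMap.ker_eq_bot']
      intro z hz
      have hz2 := hT z
      rw [hz] at hz2
      simp only [Pi.zero_apply, ne_eq, OfNat.ofNat_ne_zero, not_false_eq_true, zero_pow,
        Finset.sum_const_zero] at hz2
      funext i
      have hnn : ∀ j ∈ Finset.univ, (0:ℝ) ≤ z j ^ 2 := fun j _ => sq_nonneg _
      have := (Finset.sum_eq_zero_iff_of_nonneg hnn).1 hz2.symm i (Finset.mem_univ i)
      exact pow_eq_zero_iff (by norm_num) |>.1 this
    have hsurj : Function.Surjective T := (LinearMap.injective_iff_surjective).1 hinj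
    let e : (Fin n → ℝ) ≃ₗ[ℝ] (Fin n → ℝ) := LinearEquiv.ofBijective T ⟨hinj, hsurj⟩
    have himg : T '' A = e.symm ⁻¹' A := by
      ext y
      constructor
      · rintro ⟨z, hz, rfl⟩
        have : e.symm (T z) = z := e.symm_apply_apply z
        simpa [Set.mem_preimage, this] using hz
      · intro hy
        exact ⟨e.symm y, hy, e.apply_symm_apply y⟩
    have hmeas : MeasurableSet (T '' A) := by
      rw [himg]
      exact (e.symm.toLinearMap.continuous_of_finiteDimensional.measurable) hA
    rw [mSup_cylSet μ hμ n _ hmeas, mSup_cylSet μ hμ n A hA]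
    -- |det T| = 1
    have horth : Matrix.transpose (LinearMap.toMatrix' T) * LinearMap.toMatrix' T = 1 := by
      ext i j
      have hkey := sum_mul_eq_of_norm_preserving T hT
        (Pi.single i 1) (Pi.single j 1)
      simp only [Matrix.mul_apply, Matrix.transpose_apply, LinearMap.toMatrix'_apply]
      rw [hkey]
      by_cases hij : i = j
      · simp [hij, Matrix.one_apply, Pi.single_apply]
      · have hji : ¬ j = i := fun h => hij h.symm
        simp [hij, hji, Matrix.one_apply, Pi.single_apply]
    have hdet : LinearMap.det T * LinearMap.det T = 1 := by
      have := congrArg Matrix.det horth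
      rwa [Matrix.det_mul, Matrix.det_transpose, Matrix.det_one,
        LinearMap.det_toMatrix'] at this
    have habs : |LinearMap.det T| = 1 := by
      rcases mul_self_eq_one_iff.1 hdet with h | h <;> simp [h]
    rw [MeasureTheory.Measure.addHaar_image_linearMap, habs]
    simp
end

section
/- Let m be the measure on the Borel σ-algebra of ℝ^ℕ defined by m(A) = sup_k μ_k(A ∩ ℝ_I^k), where I = [−1/2,1/2], ℝ_I^k = {x ∈ ℝ^ℕ : x_i ∈ I for all i > k}, and μ_k is the product of k-dimensional Lebesgue measure on the first k coordinates with the countable product of uniform probability measures on I on the remaining coordinates. Then for x ∈ ℝ^ℕ, the translation invariance m(A − x) = m(A) holds for every Borel set A ⊆ ℝ^ℕ if and only if x ∈ ℓ^1, i.e. Σ_{i=1}^∞ |x_i| < ∞. -/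
open MeasureTheory
open scoped ENNReal

namespace MSupAux

open Set Filter Topology
open scoped NNReal

/-! ### Cylinders -/

def cyl (m : ℕ) (A : ℕ → Set ℝ) : Set (ℕ → ℝ) := {x | ∀ i, i < m → x i ∈ A i}

lemma mem_cyl {m : ℕ} {A : ℕ → Set ℝ} {y : ℕ → ℝ} :
    y ∈ cyl m A ↔ ∀ i, i < m → y i ∈ A i := Iff.rfl

lemma cyl_antitone {m p : ℕ} (h : m ≤ p) (A : ℕ → Set ℝ) : cyl p A ⊆ cyl m A :=
  fun y hy i hi => hy i (lt_of_lt_of_le hi h)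

lemma measurableSet_Icube : MeasurableSet Icube := measurableSet_Icc

lemma measurableSet_cyl {m : ℕ} {A : ℕ → Set ℝ} (hA : ∀ i, MeasurableSet (A i)) :
    MeasurableSet (cyl m A) := by
  have h : cyl m A = ⋂ (i : ℕ) (_ : i < m), (fun x : ℕ → ℝ => x i) ⁻¹' A i := by
    ext y; simp [cyl]
  rw [h]
  exact MeasurableSet.iInter fun i => MeasurableSet.iInter fun _ =>
    (measurable_pi_apply i) (hA i)

lemma measurableSet_RIn (k : ℕ) : MeasurableSet (RIn k) := by
  have h : RIn k = ⋂ (i : ℕ) (_ : k ≤ i), (fun x : ℕ → ℝ => x i) ⁻¹' Icube := by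
    ext y; simp [RIn]
  rw [h]
  exact MeasurableSet.iInter fun i => MeasurableSet.iInter fun _ =>
    (measurable_pi_apply i) measurableSet_Icube

lemma vol_Icc_ne_top {a b : ℝ} : volume (Set.Icc a b) ≠ ∞ := by
  rw [Real.volume_Icc]; exact ENNReal.ofReal_ne_top

lemma vol_Icube : volume Icube = 1 := by
  rw [Icube, Real.volume_Icc]; norm_num

lemma vol_le_one_of_subset_Icube {S : Set ℝ} (h : S ⊆ Icube) : volume S ≤ 1 := by
  refine le_trans (measure_mono h) (le_of_eq vol_Icube)

/-! ### The π-system of cylinders with finite heads -/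

def CylSys (j : ℕ) : Set (Set (ℕ → ℝ)) :=
  {S | ∃ m, ∃ A : ℕ → Set ℝ, j ≤ m ∧ (∀ i, MeasurableSet (A i)) ∧
    (∀ i, i < j → volume (A i) ≠ ∞) ∧ S = cyl m A}

lemma isPiSystem_cylSys (j : ℕ) : IsPiSystem (CylSys j) := by
  rintro S ⟨m, A, hjm, hA, hAf, rfl⟩ T ⟨m', A', hjm', hA', hA'f, rfl⟩ -
  refine ⟨max m m', fun l => (if l < m then A l else univ) ∩ (if l < m' then A' l else univ),
    le_trans hjm (le_max_left _ _), fun i => ?_, fun i hi => ?_, ?_⟩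
  · exact MeasurableSet.inter (by split_ifs; exacts [hA i, MeasurableSet.univ])
      (by split_ifs; exacts [hA' i, MeasurableSet.univ])
  · refine ne_top_of_le_ne_top (hAf i hi) (measure_mono ?_)
    dsimp only
    rw [if_pos (lt_of_lt_of_le hi hjm)]
    exact inter_subset_left
  · ext y
    simp only [cyl, mem_inter_iff, mem_setOf_eq]
    constructor
    · rintro ⟨h1, h2⟩ i _
      constructor
      · split_ifs with h
        · exact h1 i h
        · trivial
      · split_ifs with h
        · exact h2 i h
        · trivial
    · intro h
      constructor
      · intro i hi
        have := (h i (lt_of_lt_of_le hi (le_max_left m m'))).1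
        rwa [if_pos hi] at this
      · intro i hi
        have := (h i (lt_of_lt_of_le hi (le_max_right m m'))).2
        rwa [if_pos hi] at this

lemma ext_cyl {j : ℕ} {μ ν : Measure (ℕ → ℝ)}
    (h : ∀ m, j ≤ m → ∀ A : ℕ → Set ℝ, (∀ i, MeasurableSet (A i)) →
      (∀ i, i < j → volume (A i) ≠ ∞) → μ (cyl m A) = ν (cyl m A))
    (hfin : ∀ N : ℕ, μ (cyl j fun _ => Set.Icc (-(N : ℝ)) N) ≠ ∞) : μ = ν := by
  refine Measure.ext_of_generateFrom_of_iUnion (CylSys j)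
    (fun N => cyl j fun _ => Set.Icc (-(N : ℝ)) N) ?_ (isPiSystem_cylSys j) ?_ ?_ hfin ?_
  · -- generating
    refine le_antisymm ?_ (MeasurableSpace.generateFrom_le ?_)
    · rw [show (MeasurableSpace.pi : MeasurableSpace (ℕ → ℝ))
          = MeasurableSpace.generateFrom
            {B | ∃ (i : ℕ) (A : Set ℝ), MeasurableSet A ∧ Function.eval i ⁻¹' A = B} from
        MeasurableSpace.pi_eq_generateFrom_projections]
      refine MeasurableSpace.generateFrom_le ?_
      rintro _ ⟨i, A, hA, rfl⟩
      have key : Function.eval i ⁻¹' A = ⋃ N : ℕ, cyl (max j (i + 1))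
          (fun l => (if l = i then A else univ) ∩ (if l < j then Set.Icc (-(N : ℝ)) N else univ)) := by
        ext y
        simp only [mem_iUnion, mem_preimage, Function.eval, cyl, mem_setOf_eq, mem_inter_iff]
        constructor
        · intro hy
          refine ⟨(Finset.range j).sup fun l => ⌈|y l|⌉₊, fun l _ => ⟨?_, ?_⟩⟩
          · split_ifs with hli
            · exact hli ▸ hy
            · trivial
          · split_ifs with hlj
            · refine mem_Icc.2 (abs_le.1 (le_trans (Nat.le_ceil _) ?_))
              exact_mod_cast Nat.cast_le.2 (Finset.le_sup (f := fun l => ⌈|y l|⌉₊)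
                (Finset.mem_range.2 hlj))
            · trivial
        · rintro ⟨N, hN⟩
          have := (hN i (lt_of_lt_of_le (Nat.lt_succ_self i) (le_max_right _ _))).1
          rwa [if_pos rfl] at this
      rw [key]
      refine MeasurableSet.iUnion fun N => MeasurableSpace.measurableSet_generateFrom ?_
      refine ⟨max j (i + 1), _, le_max_left _ _, fun l => ?_, fun l hl => ?_, rfl⟩
      · exact MeasurableSet.inter (by split_ifs; exacts [hA, MeasurableSet.univ])
          (by split_ifs; exacts [measurableSet_Icc, MeasurableSet.univ])
      · refine ne_top_of_le_ne_top (vol_Icc_ne_top (a := -(N : ℝ)) (b := (N : ℝ)))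
          (measure_mono ?_)
        rw [if_pos hl]
        exact inter_subset_right
    · rintro S ⟨m, A, _, hA, _, rfl⟩
      exact measurableSet_cyl hA
  · -- union = univ
    ext y
    simp only [mem_iUnion, mem_univ, iff_true]
    refine ⟨(Finset.range j).sup fun l => ⌈|y l|⌉₊, fun i hi => ?_⟩
    refine mem_Icc.2 (abs_le.1 (le_trans (Nat.le_ceil _) ?_))
    exact_mod_cast Nat.cast_le.2 (Finset.le_sup (f := fun l => ⌈|y l|⌉₊) (Finset.mem_range.2 hi))
  · -- membership of exhaustion
    intro N
    exact ⟨j, _, le_rfl, fun _ => measurableSet_Icc, fun i _ => vol_Icc_ne_top, rfl⟩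
  · -- equality on the π-system
    rintro S ⟨m, A, hjm, hA, hAf, rfl⟩
    exact h m hjm A hA hAf

/-! ### Consequences of the product formula -/

lemma cyl_apply {k : ℕ} {μ : Measure (ℕ → ℝ)} (hμ : IsProdWithUniform k μ) {m : ℕ}
    (hm : k ≤ m) {A : ℕ → Set ℝ} (hA : ∀ i, MeasurableSet (A i)) :
    μ (cyl m A) =
      (∏ i ∈ Finset.range k, volume (A i)) * ∏ i ∈ Finset.Ico k m, volume (A i ∩ Icube) :=
  hμ m hm A hA

lemma compl_RIn_null {k : ℕ} {μ : Measure (ℕ → ℝ)} (hμ : IsProdWithUniform k μ) :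
    μ (RIn k)ᶜ = 0 := by
  have hsub : (RIn k)ᶜ ⊆ ⋃ (i : ℕ) (_ : k ≤ i), (fun y : ℕ → ℝ => y i) ⁻¹' Icubeᶜ := by
    intro y hy
    simp only [RIn, mem_compl_iff, mem_setOf_eq, not_forall] at hy
    obtain ⟨i, hki, hyi⟩ := hy
    exact mem_iUnion.2 ⟨i, mem_iUnion.2 ⟨hki, hyi⟩⟩
  refine measure_mono_null hsub (measure_iUnion_null fun i => measure_iUnion_null fun hki => ?_)
  have hset : (fun y : ℕ → ℝ => y i) ⁻¹' Icubeᶜ =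
      cyl (i + 1) (fun l => if l = i then Icubeᶜ else univ) := by
    ext y
    simp only [mem_preimage, cyl, mem_setOf_eq]
    constructor
    · intro hy l _
      split_ifs with hl
      · exact hl ▸ hy
      · trivial
    · intro hy
      have := hy i (Nat.lt_succ_self i)
      rwa [if_pos rfl] at this
  rw [hset, cyl_apply hμ (le_trans hki (Nat.le_succ i))
    (fun l => by split_ifs; exacts [measurableSet_Icube.compl, MeasurableSet.univ])]
  rw [Finset.prod_eq_zero (Finset.mem_Ico.2 ⟨hki, Nat.lt_succ_self i⟩)
    (by rw [if_pos rfl, compl_inter_self, measure_empty]), mul_zero]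

lemma measure_inter_RIn {k : ℕ} {μ : Measure (ℕ → ℝ)} (hμ : IsProdWithUniform k μ)
    (S : Set (ℕ → ℝ)) : μ (S ∩ RIn k) = μ S := by
  refine le_antisymm (measure_mono inter_subset_left) ?_
  calc μ S ≤ μ (S ∩ RIn k) + μ (RIn k)ᶜ := by
        refine le_trans (measure_mono ?_) (measure_union_le _ _)
        intro y hy
        by_cases h : y ∈ RIn k
        · exact Or.inl ⟨hy, h⟩
        · exact Or.inr h
    _ = μ (S ∩ RIn k) := by rw [compl_RIn_null hμ, add_zero]

lemma mSup_eq (μ : ℕ → Measure (ℕ → ℝ)) (hμ : ∀ k, IsProdWithUniform k (μ k))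
    (A : Set (ℕ → ℝ)) : mSup μ A = ⨆ k, μ k A := by
  exact iSup_congr fun k => measure_inter_RIn (hμ k) A

lemma isProd_unique {k : ℕ} {μ ν : Measure (ℕ → ℝ)} (hμ : IsProdWithUniform k μ)
    (hν : IsProdWithUniform k ν) : μ = ν := by
  refine ext_cyl (j := k) (fun m hm A hA _ => by rw [cyl_apply hμ hm hA, cyl_apply hν hm hA])
    fun N => ?_
  rw [cyl_apply hμ le_rfl fun _ => measurableSet_Icc]
  simp only [Finset.Ico_self, Finset.prod_empty, mul_one]
  exact (ENNReal.prod_lt_top fun i _ => vol_Icc_ne_top.lt_top).ne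

/-! ### Shift maps -/

lemma measurable_add_pi (x : ℕ → ℝ) : Measurable (fun y : ℕ → ℝ => y + x) :=
  measurable_pi_lambda _ fun i => ((measurable_pi_apply (X := fun _ : ℕ => ℝ) i).add_const (x i) :
    Measurable fun c : ℕ → ℝ => c i + x i)

lemma image_sub_eq_preimage (x : ℕ → ℝ) (A : Set (ℕ → ℝ)) :
    (fun y => y - x) '' A = (fun y => y + x) ⁻¹' A := by
  ext z
  constructor
  · rintro ⟨a, ha, rfl⟩
    simpa [sub_add_cancel] using ha
  · intro hz
    exact ⟨z + x, hz, by show z + x - x = z; rw [add_sub_cancel_right]⟩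

lemma map_add_const {k : ℕ} {μ : Measure (ℕ → ℝ)} (hμ : IsProdWithUniform k μ)
    (x' : ℕ → ℝ) (hx' : ∀ i, k ≤ i → x' i = 0) :
    Measure.map (fun y => y + x') μ = μ := by
  refine isProd_unique (k := k) ?_ hμ
  intro m hm A hA
  show Measure.map (fun y => y + x') μ (cyl m A) = _
  rw [Measure.map_apply (measurable_add_pi x') (measurableSet_cyl hA)]
  have hpre : (fun y : ℕ → ℝ => y + x') ⁻¹' cyl m A
      = cyl m (fun i => (fun s => s + x' i) ⁻¹' A i) := rfl
  rw [hpre, cyl_apply hμ hm (fun i => (measurable_add_const (x' i)) (hA i))]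
  congr 1
  · exact Finset.prod_congr rfl fun i _ => measure_preimage_add_right volume (x' i) (A i)
  · refine Finset.prod_congr rfl fun i hi => ?_
    rw [hx' i (Finset.mem_Ico.1 hi).1]
    simp

/-! ### Restriction comparison -/

lemma prod_shift {j k p : ℕ} (hjk : j ≤ k) (hkp : k ≤ p) {B : ℕ → Set ℝ}
    (hB : ∀ i, j ≤ i → i < k → volume (B i ∩ Icube) = volume (B i)) :
    (∏ i ∈ Finset.range k, volume (B i)) * ∏ i ∈ Finset.Ico k p, volume (B i ∩ Icube)
      = (∏ i ∈ Finset.range j, volume (B i)) * ∏ i ∈ Finset.Ico j p, volume (B i ∩ Icube) := by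
  have h1 : (∏ i ∈ Finset.range k, volume (B i))
      = (∏ i ∈ Finset.range j, volume (B i)) * ∏ i ∈ Finset.Ico j k, volume (B i) := by
    rw [Finset.range_eq_Ico, Finset.range_eq_Ico]
    exact (Finset.prod_Ico_consecutive (fun i => volume (B i)) (Nat.zero_le j) hjk).symm
  have h2 : (∏ i ∈ Finset.Ico j k, volume (B i))
      = ∏ i ∈ Finset.Ico j k, volume (B i ∩ Icube) := by
    refine Finset.prod_congr rfl fun i hi => ?_
    exact (hB i (Finset.mem_Ico.1 hi).1 (Finset.mem_Ico.1 hi).2).symm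
  have h3 : (∏ i ∈ Finset.Ico j k, volume (B i ∩ Icube)) *
      ∏ i ∈ Finset.Ico k p, volume (B i ∩ Icube) = ∏ i ∈ Finset.Ico j p, volume (B i ∩ Icube) :=
    Finset.prod_Ico_consecutive _ hjk hkp
  rw [h1, h2, mul_assoc, h3]

lemma restrict_RIn_eq {j k : ℕ} {μk μj : Measure (ℕ → ℝ)} (hjk : j ≤ k)
    (hk : IsProdWithUniform k μk) (hj : IsProdWithUniform j μj) :
    μk.restrict (RIn j) = μj.restrict (RIn j) := by
  refine ext_cyl (j := j) ?_ ?_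
  · intro m hm A hA hAf
    rw [Measure.restrict_apply (measurableSet_cyl hA),
      Measure.restrict_apply (measurableSet_cyl hA)]
    have hBex : ∃ B : ℕ → Set ℝ, (∀ i, i < j → B i = A i) ∧
        (∀ i, j ≤ i → i < m → B i = A i ∩ Icube) ∧ (∀ i, j ≤ i → m ≤ i → B i = Icube) := by
      refine ⟨fun i => if i < j then A i else (if i < m then A i ∩ Icube else Icube),
        fun i hi => by simp only [if_pos hi], fun i h1 h2 => ?_, fun i h1 h2 => ?_⟩
      · simp only [if_neg (not_lt.2 h1), if_pos h2]
      · simp only [if_neg (not_lt.2 h1), if_neg (not_lt.2 h2)]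
    obtain ⟨B, hB1, hB2, hB3⟩ := hBex
    have hBmeas : ∀ i, MeasurableSet (B i) := by
      intro i
      by_cases h1 : i < j
      · rw [hB1 i h1]; exact hA i
      · by_cases h2 : i < m
        · rw [hB2 i (not_lt.1 h1) h2]; exact (hA i).inter measurableSet_Icube
        · rw [hB3 i (not_lt.1 h1) (not_lt.1 h2)]; exact measurableSet_Icube
    have hBsub : ∀ i, j ≤ i → B i ⊆ Icube := by
      intro i hi
      by_cases h2 : i < m
      · rw [hB2 i hi h2]; exact inter_subset_right
      · rw [hB3 i hi (not_lt.1 h2)]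
    have hkey : cyl m A ∩ RIn j = ⋂ p : ℕ, cyl p B := by
      ext y
      simp only [mem_inter_iff, mem_cyl, RIn, mem_setOf_eq, mem_iInter]
      constructor
      · rintro ⟨h1, h2⟩ p i _
        by_cases hij : i < j
        · rw [hB1 i hij]; exact h1 i (lt_of_lt_of_le hij hm)
        · by_cases him : i < m
          · rw [hB2 i (not_lt.1 hij) him]; exact ⟨h1 i him, h2 i (not_lt.1 hij)⟩
          · rw [hB3 i (not_lt.1 hij) (not_lt.1 him)]; exact h2 i (not_lt.1 hij)
      · intro hy
        constructor
        · intro i him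
          have hyi := hy (i + 1) i (Nat.lt_succ_self i)
          by_cases hij : i < j
          · rwa [hB1 i hij] at hyi
          · rw [hB2 i (not_lt.1 hij) him] at hyi; exact hyi.1
        · intro i hji
          have hyi := hy (i + 1) i (Nat.lt_succ_self i)
          by_cases him : i < m
          · rw [hB2 i hji him] at hyi; exact hyi.2
          · rwa [hB3 i hji (not_lt.1 him)] at hyi
    have hanti : Antitone fun p => cyl p B := fun p q hpq => cyl_antitone hpq B
    have hfinB : ∀ {μ' : Measure (ℕ → ℝ)} {k' : ℕ}, IsProdWithUniform k' μ' → j ≤ k' →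
        ∀ p, k' ≤ p → μ' (cyl p B) ≠ ∞ := by
      intro μ' k' hμ' hjk' p hp
      rw [cyl_apply hμ' hp hBmeas]
      refine ENNReal.mul_ne_top ?_ ?_
      · refine (ENNReal.prod_lt_top fun i _ => ?_).ne
        by_cases hij : i < j
        · rw [hB1 i hij]; exact (hAf i hij).lt_top
        · exact lt_of_le_of_lt (vol_le_one_of_subset_Icube (hBsub i (not_lt.1 hij)))
            ENNReal.one_lt_top
      · refine (ENNReal.prod_lt_top fun i _ => ?_).ne
        exact lt_of_le_of_lt (vol_le_one_of_subset_Icube inter_subset_right)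
          ENNReal.one_lt_top
    have hlim1 := tendsto_measure_iInter_atTop (μ := μk)
      (fun p => (measurableSet_cyl hBmeas).nullMeasurableSet) hanti
      ⟨max m k, hfinB hk hjk _ (le_max_right m k)⟩
    have hlim2 := tendsto_measure_iInter_atTop (μ := μj)
      (fun p => (measurableSet_cyl hBmeas).nullMeasurableSet) hanti
      ⟨max m k, hfinB hj le_rfl _ (le_trans hjk (le_max_right m k))⟩
    have hev : ∀ p, max m k ≤ p → μj (cyl p B) = μk (cyl p B) := by
      intro p hp
      have hkp : k ≤ p := le_trans (le_max_right m k) hp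
      rw [cyl_apply hk hkp hBmeas, cyl_apply hj (le_trans hjk hkp) hBmeas]
      exact (prod_shift hjk hkp fun i hji _ => by
        rw [inter_eq_self_of_subset_left (hBsub i hji)]).symm
    rw [hkey]
    exact tendsto_nhds_unique hlim1
      (hlim2.congr' (eventually_atTop.2 ⟨max m k, fun p hp => hev p hp⟩))
  · intro N
    rw [Measure.restrict_apply (measurableSet_cyl fun _ => measurableSet_Icc)]
    have hsub : cyl j (fun _ => Set.Icc (-(N : ℝ)) N) ∩ RIn j ⊆
        cyl k (fun i => if i < j then Set.Icc (-(N : ℝ)) N else Icube) := by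
      rintro y ⟨h1, h2⟩ i _
      dsimp only
      by_cases hij : i < j
      · rw [if_pos hij]; exact h1 i hij
      · rw [if_neg hij]; exact h2 i (not_lt.1 hij)
    have hGmeas : ∀ i : ℕ,
        MeasurableSet ((fun i => if i < j then Set.Icc (-(N : ℝ)) N else Icube) i) := by
      intro i
      dsimp only
      split_ifs
      · exact measurableSet_Icc
      · exact measurableSet_Icube
    refine ne_top_of_le_ne_top ?_ (measure_mono hsub)
    rw [cyl_apply hk le_rfl hGmeas]
    simp only [Finset.Ico_self, Finset.prod_empty, mul_one]
    refine (ENNReal.prod_lt_top fun i _ => ?_).ne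
    split_ifs
    · exact vol_Icc_ne_top.lt_top
    · rw [vol_Icube]; exact ENNReal.one_lt_top

lemma meas_eq_on_RIn {j k : ℕ} {μk μj : Measure (ℕ → ℝ)} (hjk : j ≤ k)
    (hk : IsProdWithUniform k μk) (hj : IsProdWithUniform j μj) {S : Set (ℕ → ℝ)}
    (hS : MeasurableSet S) (hsub : S ⊆ RIn j) : μk S = μj S := by
  have h1 : μk S = μk.restrict (RIn j) S := by
    rw [Measure.restrict_apply hS, inter_eq_left.2 hsub]
  have h2 : μj S = μj.restrict (RIn j) S := by
    rw [Measure.restrict_apply hS, inter_eq_left.2 hsub]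
  rw [h1, h2, restrict_RIn_eq hjk hk hj]

/-! ### Geometry of shifted intervals -/

def Et (t : ℝ) : Set ℝ := {s | s - t ∈ Icube}

lemma measurableSet_Et (t : ℝ) : MeasurableSet (Et t) :=
  (measurable_id.sub_const t) measurableSet_Icube

lemma pre_inter_Icube (t : ℝ) (S : Set ℝ) :
    (fun s => s + t) ⁻¹' S ∩ Icube = (fun s => s + t) ⁻¹' (S ∩ Et t) := by
  ext s
  simp only [mem_inter_iff, mem_preimage, Et, mem_setOf_eq, add_sub_cancel_right]

lemma Et_eq (t : ℝ) : Et t = Set.Icc (-(1 / 2) + t) (1 / 2 + t) := by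
  ext s
  simp only [Et, Icube, mem_setOf_eq, mem_Icc]
  constructor <;> intro h <;> constructor <;> linarith [h.1, h.2]

lemma vol_Icube_diff_Et (t : ℝ) : volume (Icube \ Et t) ≤ ENNReal.ofReal |t| := by
  rcases le_total 0 t with ht | ht
  · have hsub : Icube \ Et t ⊆ Set.Ico (-(1 / 2)) (-(1 / 2) + t) := by
      rintro s ⟨hs1, hs2⟩
      rw [Icube, mem_Icc] at hs1
      rw [Et_eq, mem_Icc, not_and_or, not_le, not_le] at hs2
      rcases hs2 with h | h
      · exact ⟨hs1.1, h⟩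
      · exact absurd h (by linarith [hs1.2])
    refine le_trans (measure_mono hsub) ?_
    rw [Real.volume_Ico, abs_of_nonneg ht]
    exact le_of_eq (by ring_nf)
  · have hsub : Icube \ Et t ⊆ Set.Ioc (1 / 2 + t) (1 / 2) := by
      rintro s ⟨hs1, hs2⟩
      rw [Icube, mem_Icc] at hs1
      rw [Et_eq, mem_Icc, not_and_or, not_le, not_le] at hs2
      rcases hs2 with h | h
      · exact absurd h (by linarith [hs1.1])
      · exact ⟨h, hs1.2⟩
    refine le_trans (measure_mono hsub) ?_
    rw [Real.volume_Ioc, abs_of_nonpos ht]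
    exact le_of_eq (by ring_nf)

lemma vol_pre_Icube_inter (t : ℝ) :
    volume ((fun s => s + t) ⁻¹' Icube ∩ Icube) ≤ ENNReal.ofReal (1 - |t|) := by
  rw [Icube, preimage_add_const_Icc, Set.Icc_inter_Icc, Real.volume_Icc]
  refine ENNReal.ofReal_le_ofReal ?_
  rcases le_total 0 t with ht | ht
  · rw [abs_of_nonneg ht, min_eq_left (by linarith), max_eq_right (by linarith)]
    linarith
  · rw [abs_of_nonpos ht, min_eq_right (by linarith), max_eq_left (by linarith)]
    linarith

lemma vol_pre_Icube (t : ℝ) : volume ((fun s => s + t) ⁻¹' Icube) = 1 := by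
  rw [measure_preimage_add_right, vol_Icube]

/-! ### Single coordinate shifts -/

def shiftc (n : ℕ) (t : ℝ) : (ℕ → ℝ) → ℕ → ℝ := fun y l => if l = n then y l + t else y l

lemma measurable_shiftc (n : ℕ) (t : ℝ) : Measurable (shiftc n t) := by
  refine measurable_pi_lambda _ fun l => ?_
  by_cases h : l = n
  · simp only [shiftc, if_pos h]
    exact (measurable_pi_apply (X := fun _ : ℕ => ℝ) l).add_const t
  · simp only [shiftc, if_neg h]
    exact measurable_pi_apply l

lemma shiftc_preimage_cyl (n : ℕ) (t : ℝ) (m : ℕ) (A : ℕ → Set ℝ) :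
    shiftc n t ⁻¹' cyl m A
      = cyl m (fun l => if l = n then (fun s => s + t) ⁻¹' A l else A l) := by
  ext y
  simp only [mem_preimage, mem_cyl, shiftc]
  refine forall_congr' fun i => imp_congr Iff.rfl ?_
  by_cases h : i = n <;> simp [h]

lemma shiftc_restrict {k : ℕ} {μ : Measure (ℕ → ℝ)} (hμ : IsProdWithUniform k μ)
    {n : ℕ} (hn : k ≤ n) (t : ℝ) :
    (Measure.map (shiftc n t) μ).restrict {y | y n ∈ Icube ∩ Et t}
      = μ.restrict {y | y n ∈ Icube ∩ Et t} := by
  have hEmeas : MeasurableSet (Icube ∩ Et t) := measurableSet_Icube.inter (measurableSet_Et t)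
  refine ext_cyl (j := k) ?_ ?_
  · intro m hm A hA _
    rw [Measure.restrict_apply (measurableSet_cyl hA),
      Measure.restrict_apply (measurableSet_cyl hA)]
    set M := max m (n + 1) with hMdef
    set Abase : ℕ → Set ℝ := fun l => if l < m then A l else univ with hAbase
    set A' : ℕ → Set ℝ :=
      fun l => if l = n then Abase l ∩ (Icube ∩ Et t) else Abase l with hA'def
    have hAbm : ∀ l, MeasurableSet (Abase l) := by
      intro l
      rw [hAbase]
      dsimp only
      split_ifs
      · exact hA l
      · exact MeasurableSet.univ
    have hA'meas : ∀ l, MeasurableSet (A' l) := by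
      intro l
      rw [hA'def]
      dsimp only
      split_ifs
      · exact (hAbm l).inter hEmeas
      · exact hAbm l
    have hA'n : A' n ⊆ Icube ∩ Et t := by
      rw [hA'def]
      dsimp only
      rw [if_pos rfl]
      exact inter_subset_right
    have hA'ne : ∀ l, l ≠ n → A' l = Abase l := by
      intro l hl
      rw [hA'def]
      dsimp only
      rw [if_neg hl]
    have hset : cyl m A ∩ {y : ℕ → ℝ | y n ∈ Icube ∩ Et t} = cyl M A' := by
      ext y
      simp only [mem_inter_iff, mem_cyl, mem_setOf_eq]
      constructor
      · rintro ⟨h1, h2⟩ l _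
        have hbase : y l ∈ Abase l := by
          rw [hAbase]
          dsimp only
          split_ifs with h
          · exact h1 l h
          · trivial
        by_cases h : l = n
        · rw [hA'def]
          dsimp only
          rw [if_pos h]
          exact ⟨hbase, h ▸ h2⟩
        · rw [hA'ne l h]; exact hbase
      · intro hy
        have hbase : ∀ l, l < m → y l ∈ A l := by
          intro l hl
          have hyl := hy l (lt_of_lt_of_le hl (le_max_left _ _))
          have hyb : y l ∈ Abase l := by
            by_cases h : l = n
            · rw [hA'def] at hyl
              dsimp only at hyl
              rw [if_pos h] at hyl
              exact hyl.1
            · rwa [hA'ne l h] at hyl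
          rw [hAbase] at hyb
          dsimp only at hyb
          rwa [if_pos hl] at hyb
        refine ⟨hbase, ?_⟩
        have hyn := hy n (lt_of_lt_of_le (Nat.lt_succ_self n) (le_max_right _ _))
        rw [hA'def] at hyn
        dsimp only at hyn
        rw [if_pos rfl] at hyn
        exact hyn.2
    rw [hset, Measure.map_apply (measurable_shiftc n t) (measurableSet_cyl hA'meas),
      shiftc_preimage_cyl]
    have hMk : k ≤ M := le_trans hm (le_max_left _ _)
    have hA''meas : ∀ l : ℕ,
        MeasurableSet ((fun l => if l = n then (fun s => s + t) ⁻¹' A' l else A' l) l) := by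
      intro l
      dsimp only
      split_ifs
      · exact (measurable_add_const t) (hA'meas l)
      · exact hA'meas l
    rw [cyl_apply hμ hMk hA''meas, cyl_apply hμ hMk hA'meas]
    congr 1
    · refine Finset.prod_congr rfl fun i hi => ?_
      rw [if_neg (Nat.ne_of_lt (lt_of_lt_of_le (Finset.mem_range.1 hi) hn))]
    · refine Finset.prod_congr rfl fun i _ => ?_
      by_cases h : i = n
      · subst h
        rw [if_pos rfl, pre_inter_Icube, measure_preimage_add_right,
          inter_eq_left.2 (subset_trans hA'n inter_subset_right),
          inter_eq_left.2 (subset_trans hA'n inter_subset_left)]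
      · rw [if_neg h]
  · intro N
    rw [Measure.restrict_apply (measurableSet_cyl fun _ => measurableSet_Icc)]
    refine ne_top_of_le_ne_top ?_ (measure_mono inter_subset_left)
    rw [Measure.map_apply (measurable_shiftc n t)
      (measurableSet_cyl fun _ => measurableSet_Icc), shiftc_preimage_cyl]
    have hGmeas : ∀ l : ℕ, MeasurableSet ((fun l => if l = n then
        (fun s => s + t) ⁻¹' Set.Icc (-(N : ℝ)) N else Set.Icc (-(N : ℝ)) N) l) := by
      intro l
      dsimp only
      split_ifs
      · exact (measurable_add_const t) measurableSet_Icc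
      · exact measurableSet_Icc
    rw [cyl_apply hμ le_rfl hGmeas]
    simp only [Finset.Ico_self, Finset.prod_empty, mul_one]
    refine (ENNReal.prod_lt_top fun i _ => ?_).ne
    split_ifs
    · rw [measure_preimage_add_right]; exact vol_Icc_ne_top.lt_top
    · exact vol_Icc_ne_top.lt_top

lemma shiftc_le {k : ℕ} {μ : Measure (ℕ → ℝ)} (hμ : IsProdWithUniform k μ)
    {n : ℕ} (hn : k ≤ n) (t : ℝ) {C : Set (ℕ → ℝ)} (hC : MeasurableSet C) :
    μ C ≤ μ (shiftc n t ⁻¹' C) + μ (C \ {y | y n ∈ Icube ∩ Et t}) := by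
  have hEmeas : MeasurableSet (Icube ∩ Et t) := measurableSet_Icube.inter (measurableSet_Et t)
  have hEset : MeasurableSet {y : ℕ → ℝ | y n ∈ Icube ∩ Et t} :=
    (measurable_pi_apply n) hEmeas
  have h1 : μ C ≤ μ (C ∩ {y | y n ∈ Icube ∩ Et t}) + μ (C \ {y | y n ∈ Icube ∩ Et t}) :=
    measure_le_inter_add_diff μ C _
  have h2 : μ (C ∩ {y | y n ∈ Icube ∩ Et t}) ≤ μ (shiftc n t ⁻¹' C) := by
    have e1 : μ (C ∩ {y | y n ∈ Icube ∩ Et t}) = μ.restrict {y | y n ∈ Icube ∩ Et t} C := by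
      rw [Measure.restrict_apply hC]
    rw [e1, ← shiftc_restrict hμ hn t, Measure.restrict_apply hC,
      Measure.map_apply (measurable_shiftc n t) (hC.inter hEset)]
    exact measure_mono (preimage_mono inter_subset_left)
  exact le_trans h1 (add_le_add_left h2 _)


/-! ### Forward direction -/

lemma mSup_RIn_zero (μ : ℕ → Measure (ℕ → ℝ)) (hμ : ∀ k, IsProdWithUniform k (μ k)) :
    mSup μ (RIn 0) = 1 := by
  have hRIn0 : ∀ k, (μ k) (RIn 0) = 1 := by
    intro k
    have hkey : RIn 0 = ⋂ p : ℕ, cyl p (fun _ => Icube) := by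
      ext y
      simp only [RIn, mem_setOf_eq, mem_iInter, mem_cyl]
      constructor
      · intro hy p i _
        exact hy i (Nat.zero_le i)
      · intro hy i _
        exact hy (i + 1) i (Nat.lt_succ_self i)
    have hval : ∀ p, k ≤ p → μ k (cyl p (fun _ => Icube)) = 1 := by
      intro p hp
      rw [cyl_apply (hμ k) hp (fun _ => measurableSet_Icube)]
      simp [vol_Icube, inter_self]
    have hanti : Antitone fun p => cyl p (fun _ : ℕ => Icube) := fun p q h => cyl_antitone h _
    have hlim := tendsto_measure_iInter_atTop (μ := μ k)
      (fun p => (measurableSet_cyl fun _ => measurableSet_Icube).nullMeasurableSet) hanti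
      ⟨k, by rw [hval k le_rfl]; exact ENNReal.one_ne_top⟩
    rw [hkey]
    refine tendsto_nhds_unique hlim ?_
    exact tendsto_const_nhds.congr' (eventually_atTop.2 ⟨k, fun p hp => (hval p hp).symm⟩)
  rw [mSup_eq μ hμ]
  simp [hRIn0]

lemma mSup_RIn_zero_shift (μ : ℕ → Measure (ℕ → ℝ)) (hμ : ∀ k, IsProdWithUniform k (μ k))
    (x : ℕ → ℝ) (hns : ¬ Summable fun i => |x i|) :
    mSup μ ((fun y => y - x) '' RIn 0) = 0 := by
  rw [image_sub_eq_preimage, mSup_eq μ hμ]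
  have h0 : ∀ k, μ k ((fun y => y + x) ⁻¹' RIn 0) = 0 := by
    intro k
    have hsum : Tendsto (fun p => ∑ i ∈ Finset.range p, |x i|) atTop atTop :=
      (not_summable_iff_tendsto_nat_atTop_of_nonneg (fun i => abs_nonneg (x i))).1 hns
    have hbound : ∀ p, k ≤ p → μ k ((fun y => y + x) ⁻¹' RIn 0)
        ≤ ENNReal.ofReal (Real.exp (-(∑ i ∈ Finset.Ico k p, |x i|))) := by
      intro p hp
      have hsub : (fun y => y + x) ⁻¹' RIn 0 ⊆ cyl p (fun i => (fun s => s + x i) ⁻¹' Icube) :=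
        fun y hy i _ => hy i (Nat.zero_le i)
      refine le_trans (measure_mono hsub) ?_
      rw [cyl_apply (hμ k) hp (fun i => (measurable_add_const (x i)) measurableSet_Icube)]
      rw [Finset.prod_congr rfl (fun i _ => vol_pre_Icube (x i)), Finset.prod_const_one, one_mul]
      calc ∏ i ∈ Finset.Ico k p, volume ((fun s => s + x i) ⁻¹' Icube ∩ Icube)
          ≤ ∏ i ∈ Finset.Ico k p, ENNReal.ofReal (Real.exp (-|x i|)) := by
            refine Finset.prod_le_prod' fun i _ => le_trans (vol_pre_Icube_inter (x i)) ?_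
            exact ENNReal.ofReal_le_ofReal (by linarith [Real.add_one_le_exp (-|x i|)])
        _ = ENNReal.ofReal (Real.exp (-(∑ i ∈ Finset.Ico k p, |x i|))) := by
            rw [← ENNReal.ofReal_prod_of_nonneg (fun i _ => (Real.exp_pos _).le), ← Real.exp_sum]
            congr 1
            rw [Finset.sum_neg_distrib]
    have htail : Tendsto (fun p => ∑ i ∈ Finset.Ico k p, |x i|) atTop atTop := by
      have heq : ∀ p, k ≤ p → (∑ i ∈ Finset.range p, |x i|)
          + -(∑ i ∈ Finset.range k, |x i|) = ∑ i ∈ Finset.Ico k p, |x i| := by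
        intro p hp
        rw [Finset.sum_Ico_eq_sub _ hp]
        ring
      refine Tendsto.congr' (eventually_atTop.2 ⟨k, heq⟩) ?_
      exact tendsto_atTop_add_const_right atTop _ hsum
    have hzero : Tendsto (fun p => ENNReal.ofReal (Real.exp (-(∑ i ∈ Finset.Ico k p, |x i|))))
        atTop (𝓝 0) := by
      have h1 : Tendsto (fun p => -(∑ i ∈ Finset.Ico k p, |x i|)) atTop atBot :=
        tendsto_neg_atTop_atBot.comp htail
      have h2 : Tendsto (fun p => Real.exp (-(∑ i ∈ Finset.Ico k p, |x i|))) atTop (𝓝 0) :=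
        Real.tendsto_exp_atBot.comp h1
      have h3 := (ENNReal.continuous_ofReal.tendsto 0).comp h2
      simpa [Function.comp_def] using h3
    have hle : μ k ((fun y => y + x) ⁻¹' RIn 0) ≤ 0 := by
      refine ge_of_tendsto hzero ?_
      exact eventually_atTop.2 ⟨k, hbound⟩
    exact le_antisymm hle zero_le
  simp [h0]

/-! ### Backward direction -/

lemma mSup_le_shift (μ : ℕ → Measure (ℕ → ℝ)) (hμ : ∀ k, IsProdWithUniform k (μ k)) (x : ℕ → ℝ)
    (hx : Summable fun i => |x i|) {A : Set (ℕ → ℝ)} (hA : MeasurableSet A) :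
    mSup μ A ≤ mSup μ ((fun y => y - x) '' A) := by
  rw [image_sub_eq_preimage, mSup_eq μ hμ, mSup_eq μ hμ]
  refine iSup_le fun j => ?_
  rw [← measure_inter_RIn (hμ j) A]
  have hUnivBox : ⋃ N : ℕ, (cyl j fun _ => Set.Icc (-(N : ℝ)) N) = univ := by
    ext y
    simp only [mem_iUnion, mem_univ, iff_true]
    refine ⟨(Finset.range j).sup fun l => ⌈|y l|⌉₊, fun i hi => ?_⟩
    refine mem_Icc.2 (abs_le.1 (le_trans (Nat.le_ceil _) ?_))
    exact_mod_cast Nat.cast_le.2 (Finset.le_sup (f := fun l => ⌈|y l|⌉₊) (Finset.mem_range.2 hi))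
  have hcup : A ∩ RIn j = ⋃ N : ℕ, (A ∩ RIn j ∩ cyl j fun _ => Set.Icc (-(N : ℝ)) N) := by
    rw [← inter_iUnion, hUnivBox, inter_univ]
  have hdir : Directed (· ⊆ ·) fun N : ℕ => A ∩ RIn j ∩ cyl j fun _ => Set.Icc (-(N : ℝ)) N := by
    refine (Monotone.directed_le ?_)
    intro N M hNM
    refine inter_subset_inter_right _ ?_
    intro y hy i hi
    exact Set.Icc_subset_Icc (neg_le_neg (Nat.cast_le.2 hNM)) (Nat.cast_le.2 hNM) (hy i hi)
  rw [hcup, hdir.measure_iUnion]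
  refine iSup_le fun N => ?_
  refine ENNReal.le_of_forall_pos_le_add fun ε hε _ => ?_
  set BN : Set (ℕ → ℝ) := A ∩ RIn j ∩ cyl j fun _ => Set.Icc (-(N : ℝ)) N with hBN
  have hBNmeas : MeasurableSet BN :=
    (hA.inter (measurableSet_RIn j)).inter (measurableSet_cyl fun _ => measurableSet_Icc)
  have hboxfin : μ j (cyl j fun _ => Set.Icc (-(N : ℝ)) N) ≠ ∞ := by
    rw [cyl_apply (hμ j) le_rfl fun _ => measurableSet_Icc]
    simp only [Finset.Ico_self, Finset.prod_empty, mul_one]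
    exact (ENNReal.prod_lt_top fun i _ => vol_Icc_ne_top.lt_top).ne
  have hBNfin : μ j BN ≠ ∞ :=
    ne_top_of_le_ne_top hboxfin (measure_mono inter_subset_right)
  set εE : ℝ≥0∞ := (ε : ℝ≥0∞) / 2 with hεE
  have hεE0 : εE ≠ 0 := by
    rw [hεE]
    simp only [ne_eq, ENNReal.div_eq_zero_iff, ENNReal.coe_eq_zero, ENNReal.ofNat_ne_top, or_false]
    exact hε.ne'
  -- closed approximation from inside
  haveI hfinR : IsFiniteMeasure ((μ j).restrict BN) :=
    ⟨by rw [Measure.restrict_apply_univ]; exact hBNfin.lt_top⟩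
  obtain ⟨D, hDBN, hDclosed, hDlt⟩ := hBNmeas.exists_isClosed_lt_add
    (μ := (μ j).restrict BN) (by rw [Measure.restrict_apply hBNmeas, inter_self]; exact hBNfin)
    hεE0
  have hDmeas : MeasurableSet D := hDclosed.measurableSet
  have happrox : μ j BN ≤ μ j D + εE := by
    have h1 : (μ j).restrict BN BN = μ j BN := by
      rw [Measure.restrict_apply hBNmeas, inter_self]
    have h2 : (μ j).restrict BN D = μ j D := by
      rw [Measure.restrict_apply hDmeas, inter_eq_left.2 hDBN]
    calc μ j BN = (μ j).restrict BN BN := h1.symm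
      _ ≤ (μ j).restrict BN D + εE := hDlt.le
      _ = μ j D + εE := by rw [h2]
  -- choice of k
  set c : ℝ := (2 * (N : ℝ)) ^ j with hc
  have hc0 : 0 ≤ c := by positivity
  set η : ℝ := (ε : ℝ) / 2 / (c + 1) with hη
  have hη0 : 0 < η := by
    have hεpos : (0 : ℝ) < ε := hε
    rw [hη]
    positivity
  obtain ⟨s0, hs0⟩ := summable_iff_vanishing.1 hx (Set.Iio η) (Iio_mem_nhds hη0)
  set k : ℕ := max j (s0.sup id + 1) with hk
  have hjk : j ≤ k := le_max_left _ _
  have htail : ∀ n, ∑ i ∈ Finset.Ico k n, |x i| < η := by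
    intro n
    have hdisj : Disjoint (Finset.Ico k n) s0 := by
      rw [Finset.disjoint_left]
      intro i hi his
      have h1 : k ≤ i := (Finset.mem_Ico.1 hi).1
      have h2 : i ≤ s0.sup id := Finset.le_sup (f := id) his
      have h3 : s0.sup id + 1 ≤ k := le_max_right _ _
      omega
    exact hs0 _ hdisj
  have hcE : ENNReal.ofReal c * ENNReal.ofReal η ≤ εE := by
    rw [← ENNReal.ofReal_mul hc0]
    have hreal : c * η ≤ (ε : ℝ) / 2 := by
      have h1 : c / (c + 1) ≤ 1 := div_le_one_of_le₀ (by linarith) (by positivity)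
      have h2 : c * η = ((ε : ℝ) / 2) * (c / (c + 1)) := by rw [hη]; ring
      have hεpos : (0 : ℝ) ≤ ε := ε.2
      calc c * η = ((ε : ℝ) / 2) * (c / (c + 1)) := h2
        _ ≤ ((ε : ℝ) / 2) * 1 := by
            exact mul_le_mul_of_nonneg_left h1 (by positivity)
        _ = (ε : ℝ) / 2 := mul_one _
    refine le_trans (ENNReal.ofReal_le_ofReal hreal) (le_of_eq ?_)
    rw [ENNReal.ofReal_div_of_pos (by norm_num), ENNReal.ofReal_coe_nnreal, hεE]
    norm_num
  -- properties of D
  have hDR : D ⊆ RIn j := fun y hy => (hDBN hy).1.2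
  have hDbox : D ⊆ cyl j fun _ => Set.Icc (-(N : ℝ)) N := fun y hy => (hDBN hy).2
  have hDA : D ⊆ A := fun y hy => (hDBN hy).1.1
  have hjD : μ j D = μ k D := (meas_eq_on_RIn hjk (hμ k) (hμ j) hDmeas hDR).symm
  -- shifted sets
  set sfun : ℕ → ℕ → ℝ := fun n l => if l < n then x l else 0 with hsfun
  set Cn : ℕ → Set (ℕ → ℝ) := fun n => (fun y => y + sfun n) ⁻¹' D with hCn
  have hCnmeas : ∀ n, MeasurableSet (Cn n) := fun n => (measurable_add_pi (sfun n)) hDmeas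
  have hkD : μ k D = μ k (Cn k) := by
    have h1 : Measure.map (fun y => y + sfun k) (μ k) = μ k :=
      map_add_const (hμ k) (sfun k) (fun i hi => by rw [hsfun]; dsimp only; rw [if_neg (not_lt.2 hi)])
    calc μ k D = Measure.map (fun y => y + sfun k) (μ k) D := by rw [h1]
      _ = μ k (Cn k) := Measure.map_apply (measurable_add_pi (sfun k)) hDmeas
  have hframe : ∀ n, k ≤ n → ∀ y, y ∈ Cn n →
      (∀ l, l < j → y l + x l ∈ Set.Icc (-(N : ℝ)) N) ∧
      (∀ l, j ≤ l → y l + sfun n l ∈ Icube) := by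
    intro n hn y hy
    have hyD : y + sfun n ∈ D := hy
    constructor
    · intro l hl
      have h1 := hDbox hyD l hl
      have h2 : (y + sfun n) l = y l + x l := by
        show y l + sfun n l = y l + x l
        rw [hsfun]; dsimp only
        rw [if_pos (lt_of_lt_of_le hl (le_trans hjk hn))]
      rwa [h2] at h1
    · intro l hl
      exact hDR hyD l hl
  have hheadval : ∀ l : ℕ, volume ((fun s => s + x l) ⁻¹' Set.Icc (-(N : ℝ)) N)
      = ENNReal.ofReal (2 * N) := by
    intro l
    rw [measure_preimage_add_right, Real.volume_Icc]
    congr 1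
    ring
  -- single step
  have hstep : ∀ n, k ≤ n →
      μ k (Cn n) ≤ μ k (Cn (n + 1)) + ENNReal.ofReal c * ENNReal.ofReal |x n| := by
    intro n hn
    have h1 := shiftc_le (hμ k) hn (x n) (hCnmeas n)
    have hpre : shiftc n (x n) ⁻¹' Cn n = Cn (n + 1) := by
      ext y
      rw [hCn]
      simp only [mem_preimage]
      have heq : shiftc n (x n) y + sfun n = y + sfun (n + 1) := by
        funext l
        show shiftc n (x n) y l + sfun n l = y l + sfun (n + 1) l
        rw [hsfun]
        dsimp only [shiftc]
        by_cases h : l = n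
        · subst h
          rw [if_pos rfl, if_neg (lt_irrefl l), if_pos (Nat.lt_succ_self l)]
          ring
        · rw [if_neg h]
          congr 1
          by_cases h2 : l < n
          · rw [if_pos h2, if_pos (lt_of_lt_of_le h2 (Nat.le_succ n))]
          · rw [if_neg h2, if_neg (by omega)]
      rw [heq]
    have herr : μ k (Cn n \ {y | y n ∈ Icube ∩ Et (x n)})
        ≤ ENNReal.ofReal c * ENNReal.ofReal |x n| := by
      set G : ℕ → Set ℝ := fun l => if l < j then (fun s => s + x l) ⁻¹' Set.Icc (-(N : ℝ)) N
        else if l < k then (fun s => s + x l) ⁻¹' Icube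
        else if l = n then Icube \ Et (x n) else univ with hG
      have hGmeas : ∀ l, MeasurableSet (G l) := by
        intro l
        rw [hG]; dsimp only
        split_ifs
        · exact (measurable_add_const (x l)) measurableSet_Icc
        · exact (measurable_add_const (x l)) measurableSet_Icube
        · exact measurableSet_Icube.diff (measurableSet_Et (x n))
        · exact MeasurableSet.univ
      have hsubG : Cn n \ {y | y n ∈ Icube ∩ Et (x n)} ⊆ cyl (n + 1) G := by
        rintro y ⟨hy1, hy2⟩ l _
        obtain ⟨hf1, hf2⟩ := hframe n hn y hy1
        rw [hG]; dsimp only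
        split_ifs with h1 h2 h3
        · exact hf1 l h1
        · have h4 := hf2 l (not_lt.1 h1)
          have h5 : sfun n l = x l := by
            rw [hsfun]; dsimp only
            rw [if_pos (lt_of_lt_of_le h2 hn)]
          rw [h5] at h4
          exact h4
        · have hjn : j ≤ n := h3 ▸ not_lt.1 h1
          have hIn : y n ∈ Icube := by
            have h5 := hf2 n hjn
            have h6 : sfun n n = 0 := by
              rw [hsfun]; dsimp only
              rw [if_neg (lt_irrefl n)]
            rwa [h6, add_zero] at h5
          rw [h3]
          exact ⟨hIn, fun hEt => hy2 ⟨hIn, hEt⟩⟩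
        · trivial
      refine le_trans (measure_mono hsubG) ?_
      rw [cyl_apply (hμ k) (le_trans hn (Nat.le_succ n)) hGmeas]
      have hP1 : (∏ i ∈ Finset.range k, volume (G i)) = ENNReal.ofReal c := by
        have e1 : ∀ i ∈ Finset.Ico 0 j, volume (G i) = ENNReal.ofReal (2 * N) := by
          intro i hi
          rw [hG]; dsimp only
          rw [if_pos (Finset.mem_Ico.1 hi).2]
          exact hheadval i
        have e2 : ∀ i ∈ Finset.Ico j k, volume (G i) = 1 := by
          intro i hi
          rw [hG]; dsimp only
          rw [if_neg (not_lt.2 (Finset.mem_Ico.1 hi).1), if_pos (Finset.mem_Ico.1 hi).2]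
          exact vol_pre_Icube (x i)
        rw [Finset.range_eq_Ico, ← Finset.prod_Ico_consecutive _ (Nat.zero_le j) hjk,
          Finset.prod_congr rfl e1, Finset.prod_congr rfl e2, Finset.prod_const,
          Finset.prod_const_one, mul_one, Nat.card_Ico, Nat.sub_zero, hc,
          ← ENNReal.ofReal_pow (by positivity)]
      have hP2 : (∏ i ∈ Finset.Ico k (n + 1), volume (G i ∩ Icube)) ≤ ENNReal.ofReal |x n| := by
        rw [Finset.prod_Ico_succ_top hn]
        have e3 : ∀ i ∈ Finset.Ico k n, volume (G i ∩ Icube) = 1 := by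
          intro i hi
          have hi1 := (Finset.mem_Ico.1 hi).1
          have hi2 := (Finset.mem_Ico.1 hi).2
          rw [hG]; dsimp only
          rw [if_neg (by omega), if_neg (by omega), if_neg (by omega), univ_inter]
          exact vol_Icube
        rw [Finset.prod_congr rfl e3, Finset.prod_const_one, one_mul]
        rw [hG]; dsimp only
        rw [if_neg (by omega), if_neg (by omega), if_pos rfl,
          inter_eq_left.2 diff_subset]
        exact vol_Icube_diff_Et (x n)
      rw [hP1]
      exact mul_le_mul_right hP2 _
    rw [hpre] at h1
    exact le_trans h1 (add_le_add_right herr _)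
  -- telescoping
  have hind : ∀ n, k ≤ n → μ k (Cn k) ≤ μ k (Cn n)
      + ENNReal.ofReal c * ENNReal.ofReal (∑ i ∈ Finset.Ico k n, |x i|) := by
    intro n
    refine Nat.le_induction ?_ ?_ n
    · simp
    · intro n hn ih
      calc μ k (Cn k) ≤ μ k (Cn n)
            + ENNReal.ofReal c * ENNReal.ofReal (∑ i ∈ Finset.Ico k n, |x i|) := ih
        _ ≤ (μ k (Cn (n + 1)) + ENNReal.ofReal c * ENNReal.ofReal |x n|)
            + ENNReal.ofReal c * ENNReal.ofReal (∑ i ∈ Finset.Ico k n, |x i|) :=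
            add_le_add_left (hstep n hn) _
        _ = μ k (Cn (n + 1))
            + ENNReal.ofReal c * ENNReal.ofReal (∑ i ∈ Finset.Ico k (n + 1), |x i|) := by
            rw [Finset.sum_Ico_succ_top hn,
              ENNReal.ofReal_add (Finset.sum_nonneg fun i _ => abs_nonneg (x i)) (abs_nonneg (x n)),
              mul_add]
            ring
  have hbnd : ∀ n, k ≤ n → μ k (Cn k) ≤ μ k (Cn n) + εE := by
    intro n hn
    refine le_trans (hind n hn) (add_le_add_right ?_ _)
    refine le_trans (mul_le_mul_right (ENNReal.ofReal_le_ofReal (htail n).le) _) hcE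
  -- the limiting set
  set T : ℕ → Set (ℕ → ℝ) := fun q => ⋃ p : ℕ, Cn (k + q + p) with hT
  have hTmeas : ∀ q, MeasurableSet (T q) := fun q => MeasurableSet.iUnion fun p => hCnmeas _
  have hTanti : Antitone T := by
    intro q q' hqq' y hy
    rcases mem_iUnion.1 hy with ⟨p, hp⟩
    exact mem_iUnion.2 ⟨(q' - q) + p, by rwa [show k + q + ((q' - q) + p) = k + q' + p by omega]⟩
  have hTfin : μ k (T 0) ≠ ∞ := by
    set H : ℕ → Set ℝ := fun l => if l < j then (fun s => s + x l) ⁻¹' Set.Icc (-(N : ℝ)) N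
      else ((fun s => s + x l) ⁻¹' Icube ∪ Icube) with hH
    have hHmeas : ∀ l, MeasurableSet (H l) := by
      intro l
      rw [hH]; dsimp only
      split_ifs
      · exact (measurable_add_const (x l)) measurableSet_Icc
      · exact ((measurable_add_const (x l)) measurableSet_Icube).union measurableSet_Icube
    have hsubH : T 0 ⊆ cyl k H := by
      intro y hy
      rcases mem_iUnion.1 hy with ⟨p, hp⟩
      obtain ⟨hf1, hf2⟩ := hframe (k + 0 + p) (by omega) y hp
      intro l hl
      rw [hH]; dsimp only
      split_ifs with h1
      · exact hf1 l h1
      · have h4 := hf2 l (not_lt.1 h1)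
        by_cases h5 : l < k + 0 + p
        · have h6 : sfun (k + 0 + p) l = x l := by
            rw [hsfun]; dsimp only
            rw [if_pos h5]
          rw [h6] at h4
          exact Or.inl h4
        · have h6 : sfun (k + 0 + p) l = 0 := by
            rw [hsfun]; dsimp only
            rw [if_neg h5]
          rw [h6, add_zero] at h4
          exact Or.inr h4
    refine ne_top_of_le_ne_top ?_ (measure_mono hsubH)
    rw [cyl_apply (hμ k) le_rfl hHmeas]
    simp only [Finset.Ico_self, Finset.prod_empty, mul_one]
    refine (ENNReal.prod_lt_top fun i _ => ?_).ne
    rw [hH]; dsimp only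
    split_ifs
    · rw [measure_preimage_add_right]
      exact vol_Icc_ne_top.lt_top
    · refine lt_of_le_of_lt (measure_union_le _ _) ?_
      rw [vol_pre_Icube, vol_Icube]
      norm_num
  have hlimT := tendsto_measure_iInter_atTop (μ := μ k)
    (fun q => (hTmeas q).nullMeasurableSet) hTanti ⟨0, hTfin⟩
  have hCle : μ k (Cn k) ≤ μ k (⋂ q, T q) + εE := by
    refine ge_of_tendsto (hlimT.add (tendsto_const_nhds (x := εE))) ?_
    refine Eventually.of_forall fun q => ?_
    refine le_trans (hbnd (k + q) (by omega)) (add_le_add_left (measure_mono ?_) εE)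
    intro y hy
    exact mem_iUnion.2 ⟨0, hy⟩
  have hiT : (⋂ q, T q) ⊆ (fun y => y + x) ⁻¹' D := by
    intro y hy
    simp only [mem_iInter, hT, mem_iUnion] at hy
    choose p hp using hy
    have htend : Tendsto (fun q => y + sfun (k + q + p q)) atTop (𝓝 (y + x)) := by
      rw [tendsto_pi_nhds]
      intro l
      refine Tendsto.congr' ?_ tendsto_const_nhds
      filter_upwards [eventually_ge_atTop (l + 1)] with q hq
      show y l + x l = y l + sfun (k + q + p q) l
      rw [hsfun]; dsimp only
      rw [if_pos (by omega)]
    exact hDclosed.mem_of_tendsto htend (Eventually.of_forall fun q => hp q)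
  calc μ j BN ≤ μ j D + εE := happrox
    _ = μ k D + εE := by rw [hjD]
    _ = μ k (Cn k) + εE := by rw [hkD]
    _ ≤ (μ k (⋂ q, T q) + εE) + εE := add_le_add_left hCle εE
    _ ≤ (μ k ((fun y => y + x) ⁻¹' D) + εE) + εE := by
        exact add_le_add_left (add_le_add_left (measure_mono hiT) εE) εE
    _ ≤ (μ k ((fun y => y + x) ⁻¹' A) + εE) + εE := by
        exact add_le_add_left (add_le_add_left (measure_mono (preimage_mono hDA)) εE) εE
    _ ≤ ((⨆ k', μ k' ((fun y => y + x) ⁻¹' A)) + εE) + εE := by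
        exact add_le_add_left (add_le_add_left
          (le_iSup (fun k' => μ k' ((fun y => y + x) ⁻¹' A)) k) εE) εE
    _ = (⨆ k', μ k' ((fun y => y + x) ⁻¹' A)) + ε := by
        rw [add_assoc, hεE, ENNReal.add_halves]

end MSupAux

/-- for `x ∈ ℝ^ℕ`, the measure `m(A) = sup_k μₖ(A ∩ ℝ_I^k)` satisfies
`m(A - x) = m(A)` for every Borel set `A` if and only if `x ∈ ℓ¹`, i.e.
`Σ_i |x_i| < ∞`. -/
theorem mSup_translation_invariant_iff_ell_one
    (μ : ℕ → Measure (ℕ → ℝ)) (hμ : ∀ k, IsProdWithUniform k (μ k)) (x : ℕ → ℝ) :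
    (∀ A : Set (ℕ → ℝ), MeasurableSet A →
      mSup μ ((fun y => y - x) '' A) = mSup μ A) ↔ Summable fun i => |x i| := by
  constructor
  · intro h
    by_contra hns
    have h1 := h (RIn 0) (MSupAux.measurableSet_RIn 0)
    rw [MSupAux.mSup_RIn_zero μ hμ, MSupAux.mSup_RIn_zero_shift μ hμ x hns] at h1
    exact zero_ne_one h1
  · intro hx A hA
    refine le_antisymm ?_ (MSupAux.mSup_le_shift μ hμ x hx hA)
    have hximg : MeasurableSet ((fun y => y - x) '' A) := by
      rw [MSupAux.image_sub_eq_preimage]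
      exact (MSupAux.measurable_add_pi x) hA
    have hxneg : Summable fun i => |(-x) i| := by
      simpa using hx
    have h2 := MSupAux.mSup_le_shift μ hμ (-x) hxneg hximg
    have hset : (fun y => y - -x) '' ((fun y => y - x) '' A) = A := by
      rw [MSupAux.image_sub_eq_preimage, MSupAux.image_sub_eq_preimage, Set.preimage_preimage]
      have : (fun y : ℕ → ℝ => y + -x + x) = id := by
        funext y
        simp
      rw [this, Set.preimage_id]
    rwa [hset] at h2
end
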